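/- Let T be an alternation acyclic tournament on {1,…,n}. Then there exist real numbers x_1, …, x_n, y_1, …, y_{n−1} with x_i − y_i ≠ x_j for all 1 ≤ i < j ≤ n, such that for each i < j the tournament T has the edge i → j exactly when x_i − y_i > x_j (and the edge j → i exactly when x_i − y_i < x_j). -/

import Mathlib

/-- `T` is a tournament on the vertex set `{1, …, n}`: edges only join distinct
vertices of `{1, …, n}`, and for each pair of distinct vertices exactly one
direction is present. -/
def IsTournamentOn (n : ℕ) (T : ℕ → ℕ → Prop) : Prop :=
  (∀ i j, T i j → i ∈ Finset.Icc 1 n ∧ j ∈ Finset.Icc 1 n ∧ i ≠ j) ∧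
  (∀ i j, i ∈ Finset.Icc 1 n → j ∈ Finset.Icc 1 n → i ≠ j → (T i j ↔ ¬ T j i))

/-- `T` contains an alternating cycle: a directed cycle `(c 0, …, c (2k-1))`,
`k ≥ 2`, on distinct vertices of `{1, …, n}`, in which (indices mod `2k`) every
edge `c (2j) → c (2j+1)` is a descent and every edge `c (2j+1) → c (2j+2)` is
an ascent. -/
def HasAltCycle (n : ℕ) (T : ℕ → ℕ → Prop) : Prop :=
  ∃ k : ℕ, 2 ≤ k ∧ ∃ c : ℕ → ℕ,
    (∀ i < 2 * k, c i ∈ Finset.Icc 1 n) ∧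
    (∀ i < 2 * k, ∀ j < 2 * k, i ≠ j → c i ≠ c j) ∧
    (∀ j < k, T (c (2 * j)) (c (2 * j + 1)) ∧ c (2 * j + 1) < c (2 * j)) ∧
    (∀ j < k, T (c (2 * j + 1)) (c ((2 * j + 2) % (2 * k))) ∧
      c (2 * j + 1) < c ((2 * j + 2) % (2 * k)))

/-- A tournament is alternation acyclic if it contains no alternating cycle. -/
def AltAcyclic (n : ℕ) (T : ℕ → ℕ → Prop) : Prop := ¬ HasAltCycle n T

/-- The right-alternating walk relation `u ⊑ v`: `u = v` or there is a directed
walk `u = w 0 → w 1 → ⋯ → w (2i) = v` inside `{1, …, n}` in which descents and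
ascents alternate, the first edge being a descent and the last one an ascent. -/
def RAWalk (n : ℕ) (T : ℕ → ℕ → Prop) (u v : ℕ) : Prop :=
  u = v ∨ ∃ i : ℕ, 1 ≤ i ∧ ∃ w : ℕ → ℕ, w 0 = u ∧ w (2 * i) = v ∧
    (∀ j ≤ 2 * i, w j ∈ Finset.Icc 1 n) ∧
    (∀ j < i, T (w (2 * j)) (w (2 * j + 1)) ∧ w (2 * j + 1) < w (2 * j)) ∧
    (∀ j < i, T (w (2 * j + 1)) (w (2 * j + 2)) ∧ w (2 * j + 1) < w (2 * j + 2))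

/-- The parent function condition: `p` maps each `u ∈ {1,…,n}` to an element of
`{2,…,n} ∪ {∞}` with `p u > u`. -/
def IsParent (n : ℕ) (p : ℕ → ℕ∞) : Prop :=
  ∀ u ∈ Finset.Icc 1 n, (u : ℕ∞) < p u ∧ ∀ m : ℕ, p u = (m : ℕ∞) → m ∈ Finset.Icc 2 n

/-- In the tournament induced by the code `(π, p)`, there is an ascent `u → v`
(for `u < v`) exactly when `p u` is finite and the position of `v` in `π` is at
least the position of `p u`. -/
def CodeAsc (π : Equiv.Perm ℕ) (p : ℕ → ℕ∞) (u v : ℕ) : Prop :=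
  u < v ∧ ∃ m : ℕ, p u = (m : ℕ∞) ∧ π.symm m ≤ π.symm v

/-- The tournament induced by the code `(π, p)`: for `u < v` the edge `u → v` is
present exactly when `CodeAsc π p u v`, otherwise the edge `v → u` is present. -/
def CodeT (π : Equiv.Perm ℕ) (p : ℕ → ℕ∞) (u v : ℕ) : Prop :=
  CodeAsc π p u v ∨ (v < u ∧ ¬ CodeAsc π p v u)

/-- A closed alternating walk of length `2*m` in `T`. -/
def HLACAW (T : ℕ → ℕ → Prop) (m : ℕ) (c : ℕ → ℕ) : Prop :=
  c (2*m) = c 0 ∧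
  (∀ j < m, T (c (2*j)) (c (2*j+1)) ∧ c (2*j+1) < c (2*j)) ∧
  (∀ j < m, T (c (2*j+1)) (c (2*j+2)) ∧ c (2*j+1) < c (2*j+2))

lemma hla_mod0 {m : ℕ} (s j : ℕ) :
    (2*j + 2*s) % (2*m) = 2*((j+s) % m) := by
  rw [show 2*j + 2*s = 2*(j+s) by ring, Nat.mul_mod_mul_left]

lemma hla_mod1 {m : ℕ} (hm : 1 ≤ m) (s j : ℕ) :
    (2*j + 1 + 2*s) % (2*m) = 2*((j+s) % m) + 1 := by
  have h1 : (j+s) % m < m := Nat.mod_lt _ (by omega)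
  have h2 : j + s = m * ((j+s)/m) + (j+s) % m := (Nat.div_add_mod _ _).symm
  have h3 : (2*m) * ((j+s)/m) = 2 * (m * ((j+s)/m)) := by ring
  rw [show 2*j + 1 + 2*s = (2*((j+s)%m) + 1) + (2*m) * ((j+s)/m) by omega,
    Nat.add_mul_mod_self_left, Nat.mod_eq_of_lt (by omega)]

lemma hla_rotate {T : ℕ → ℕ → Prop} {m : ℕ} {c : ℕ → ℕ} (hm : 1 ≤ m)
    (h : HLACAW T m c) (s : ℕ) : HLACAW T m (fun j => c ((j + 2*s) % (2*m))) := by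
  obtain ⟨hclose, hdes, hasc⟩ := h
  refine ⟨?_, ?_, ?_⟩
  · show c ((2*m + 2*s) % (2*m)) = c ((0 + 2*s) % (2*m))
    rw [show (0:ℕ) + 2*s = 2*0 + 2*s by omega, hla_mod0, hla_mod0]
    congr 2
    rw [Nat.add_mod_left, Nat.zero_add]
  · intro j hj
    show T (c ((2*j + 2*s) % (2*m))) (c ((2*j+1 + 2*s) % (2*m))) ∧
      c ((2*j+1 + 2*s) % (2*m)) < c ((2*j + 2*s) % (2*m))
    rw [hla_mod0, hla_mod1 hm]
    exact hdes _ (Nat.mod_lt _ (by omega))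
  · intro j hj
    show T (c ((2*j+1 + 2*s) % (2*m))) (c ((2*j+2 + 2*s) % (2*m))) ∧
      c ((2*j+1 + 2*s) % (2*m)) < c ((2*j+2 + 2*s) % (2*m))
    rw [hla_mod1 hm]
    have e : (2*j+2 + 2*s) % (2*m) = 2*((j+1+s) % m) := by
      rw [show 2*j+2 + 2*s = 2*(j+1) + 2*s by ring, hla_mod0]
    rw [e]
    set q := (j+s) % m with hq
    have hqm : q < m := Nat.mod_lt _ (by omega)
    have e2 : (j+1+s) % m = (q+1) % m := by
      rw [show j+1+s = j+s+1 by omega, hq, Nat.mod_add_mod]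
    rcases Nat.lt_or_ge (q+1) m with h1 | h1
    · rw [e2, Nat.mod_eq_of_lt h1, show 2*(q+1) = 2*q+2 by ring]
      exact hasc q hqm
    · have hq1 : q + 1 = m := by omega
      have e3 : c (2*((j+1+s) % m)) = c (2*q+2) := by
        rw [e2, hq1, Nat.mod_self, show 2*q+2 = 2*m by omega]
        exact hclose.symm
      rw [e3]
      exact hasc q hqm

lemma hla_even_repeat {T : ℕ → ℕ → Prop} {m : ℕ} {c : ℕ → ℕ}
    (h : HLACAW T m c) {t : ℕ} (htm : t ≤ m) (he : c (2*t) = c 0) :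
    HLACAW T t c :=
  ⟨he, fun j hj => h.2.1 j (lt_of_lt_of_le hj htm), fun j hj => h.2.2 j (lt_of_lt_of_le hj htm)⟩

lemma hla_odd_repeat {T : ℕ → ℕ → Prop} {m : ℕ} {c : ℕ → ℕ}
    (h : HLACAW T m c) {t : ℕ} (ht : 1 ≤ t) (htm : t < m) (he : c (2*t+1) = c 1) :
    HLACAW T t (fun j => c (2 + j % (2*t))) := by
  obtain ⟨hclose, hdes, hasc⟩ := h
  refine ⟨?_, ?_, ?_⟩
  · show c (2 + (2*t) % (2*t)) = c (2 + 0 % (2*t))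
    rw [Nat.mod_self, Nat.zero_mod]
  · intro j hj
    show T (c (2 + (2*j) % (2*t))) (c (2 + (2*j+1) % (2*t))) ∧
      c (2 + (2*j+1) % (2*t)) < c (2 + (2*j) % (2*t))
    rw [Nat.mod_eq_of_lt (by omega), Nat.mod_eq_of_lt (by omega),
      show 2 + 2*j = 2*(j+1) by ring, show 2 + (2*j+1) = 2*(j+1)+1 by ring]
    exact hdes (j+1) (by omega)
  · intro j hj
    show T (c (2 + (2*j+1) % (2*t))) (c (2 + (2*j+2) % (2*t))) ∧
      c (2 + (2*j+1) % (2*t)) < c (2 + (2*j+2) % (2*t))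
    rw [Nat.mod_eq_of_lt (show 2*j+1 < 2*t by omega),
      show 2 + (2*j+1) = 2*(j+1)+1 by ring]
    rcases Nat.lt_or_ge (j+1) t with h1 | h1
    · rw [Nat.mod_eq_of_lt (by omega), show 2 + (2*j+2) = 2*(j+1)+2 by ring]
      exact hasc (j+1) (by omega)
    · have hjt : j + 1 = t := by omega
      have e : (2*j+2) % (2*t) = 0 := by
        rw [show 2*j+2 = 2*t by omega, Nat.mod_self]
      rw [e, show 2*(j+1)+1 = 2*t+1 by omega, he]
      have := hasc 0 (by omega)
      rw [show 2*0+1 = 1 by rfl, show 2*0+2 = 2 by rfl] at this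
      exact this

lemma hla_mixed {n : ℕ} {T : ℕ → ℕ → Prop} (hT : IsTournamentOn n T)
    {m : ℕ} {c : ℕ → ℕ} (hm : 2 ≤ m)
    (h : HLACAW T m c) {t : ℕ} (htm : t < m) (he : c (2*t+1) = c 0) :
    ∃ m', 1 ≤ m' ∧ m' < m ∧ ∃ c', HLACAW T m' c' := by
  obtain ⟨hclose, hdes, hasc⟩ := h
  have hd0 : T (c 0) (c 1) ∧ c 1 < c 0 := by
    have := hdes 0 (by omega)
    rwa [show 2*0 = 0 by rfl, show 2*0+1 = 1 by rfl] at this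
  -- t ≥ 1
  have ht1 : 1 ≤ t := by
    by_contra h'
    have ht0 : t = 0 := by omega
    rw [ht0, show 2*0+1 = 1 by rfl] at he
    omega
  -- t ≤ m - 2
  have ht2 : t + 2 ≤ m := by
    by_contra h'
    have htm1 : t = m - 1 := by omega
    have := hasc t htm
    rw [he, show 2*t+2 = 2*m by omega, hclose] at this
    omega
  set α := c 1 with hα
  set β := c (2*t+2) with hβ
  have hasct := hasc t htm
  rw [he] at hasct
  have hαβlt : α < β := by omega
  have hαmem : α ∈ Finset.Icc 1 n := (hT.1 _ _ hd0.1).2.1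
  have hβmem : β ∈ Finset.Icc 1 n := (hT.1 _ _ hasct.1).2.1
  by_cases hab : T α β
  · -- shortcut walk of length 2*(m-t)
    refine ⟨m - t, by omega, by omega, fun j => if j < 2 then c j else c (2*t + j), ?_, ?_, ?_⟩
    · show (if 2*(m-t) < 2 then c (2*(m-t)) else c (2*t + 2*(m-t))) = (if 0 < 2 then c 0 else _)
      rw [if_neg (by omega), if_pos (by omega), show 2*t + 2*(m-t) = 2*m by omega, hclose]
    · intro j hj
      show T (if 2*j < 2 then c (2*j) else c (2*t + 2*j))
          (if 2*j+1 < 2 then c (2*j+1) else c (2*t + (2*j+1))) ∧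
        (if 2*j+1 < 2 then c (2*j+1) else c (2*t + (2*j+1))) <
          (if 2*j < 2 then c (2*j) else c (2*t + 2*j))
      rcases Nat.eq_zero_or_pos j with hj0 | hj0
      · subst hj0
        rw [if_pos (by omega), if_pos (by omega)]
        exact hd0
      · rw [if_neg (by omega), if_neg (by omega),
          show 2*t + 2*j = 2*(t+j) by ring, show 2*t + (2*j+1) = 2*(t+j)+1 by ring]
        exact hdes (t+j) (by omega)
    · intro j hj
      show T (if 2*j+1 < 2 then c (2*j+1) else c (2*t + (2*j+1)))
          (if 2*j+2 < 2 then c (2*j+2) else c (2*t + (2*j+2))) ∧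
        (if 2*j+1 < 2 then c (2*j+1) else c (2*t + (2*j+1))) <
          (if 2*j+2 < 2 then c (2*j+2) else c (2*t + (2*j+2)))
      rcases Nat.eq_zero_or_pos j with hj0 | hj0
      · subst hj0
        rw [if_pos (by omega), if_neg (by omega), show 2*t + (2*0+2) = 2*t+2 by ring]
        exact ⟨hab, hαβlt⟩
      · rw [if_neg (by omega), if_neg (by omega),
          show 2*t + (2*j+1) = 2*(t+j)+1 by ring, show 2*t + (2*j+2) = 2*(t+j)+2 by ring]
        exact hasc (t+j) (by omega)
  · have hba : T β α := by
      by_contra h'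
      exact hab ((hT.2 α β hαmem hβmem (by omega)).mpr h')
    refine ⟨t + 1, by omega, by omega, fun j => if j = 0 then c (2*t+2) else c j, ?_, ?_, ?_⟩
    · show (if 2*(t+1) = 0 then _ else c (2*(t+1))) = (if (0:ℕ) = 0 then c (2*t+2) else c 0)
      rw [if_neg (by omega), if_pos rfl, show 2*(t+1) = 2*t+2 by ring]
    · intro j hj
      show T (if 2*j = 0 then c (2*t+2) else c (2*j))
          (if 2*j+1 = 0 then c (2*t+2) else c (2*j+1)) ∧
        (if 2*j+1 = 0 then c (2*t+2) else c (2*j+1)) <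
          (if 2*j = 0 then c (2*t+2) else c (2*j))
      rcases Nat.eq_zero_or_pos j with hj0 | hj0
      · subst hj0
        rw [if_pos (by omega), if_neg (by omega), show 2*0+1 = 1 by rfl]
        exact ⟨hba, hαβlt⟩
      · rw [if_neg (by omega), if_neg (by omega)]
        exact hdes j (by omega)
    · intro j hj
      show T (if 2*j+1 = 0 then c (2*t+2) else c (2*j+1))
          (if 2*j+2 = 0 then c (2*t+2) else c (2*j+2)) ∧
        (if 2*j+1 = 0 then c (2*t+2) else c (2*j+1)) <
          (if 2*j+2 = 0 then c (2*t+2) else c (2*j+2))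
      rw [if_neg (by omega), if_neg (by omega)]
      exact hasc j (by omega)

lemma hla_no_caw {n : ℕ} {T : ℕ → ℕ → Prop} (hT : IsTournamentOn n T)
    (hA : AltAcyclic n T) : ∀ m, 1 ≤ m → ∀ c, ¬ HLACAW T m c := by
  intro m
  induction m using Nat.strong_induction_on with
  | _ m IH =>
  intro hm c hc
  have htot : ∀ a b, T a b → T b a → False := by
    intro a b hab hba
    obtain ⟨ha, hb, hne⟩ := hT.1 a b hab
    exact ((hT.2 a b ha hb hne).mp hab) hba
  obtain ⟨hclose, hdes, hasc⟩ := hc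
  rcases Nat.lt_or_ge m 2 with h1 | h2
  · -- m = 1
    have hm1 : m = 1 := by omega
    subst hm1
    have d := hdes 0 (by omega)
    have a := hasc 0 (by omega)
    rw [show 2*0+2 = 2*1 by rfl, hclose] at a
    exact htot _ _ d.1 a.1
  · by_cases hdist : ∀ i < 2*m, ∀ j < 2*m, i ≠ j → c i ≠ c j
    · -- genuine alternating cycle
      apply hA
      refine ⟨m, h2, c, ?_, hdist, hdes, ?_⟩
      · intro i hi
        rcases Nat.even_or_odd i with ⟨j, hj⟩ | ⟨j, hj⟩
        · rw [show i = 2*j by omega]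
          exact (hT.1 _ _ (hdes j (by omega)).1).1
        · rw [show i = 2*j+1 by omega]
          exact (hT.1 _ _ (hdes j (by omega)).1).2.1
      · intro j hj
        rcases Nat.lt_or_ge (j+1) m with h3 | h3
        · rw [Nat.mod_eq_of_lt (by omega)]
          exact hasc j hj
        · have e : (2*j+2) % (2*m) = 0 := by
            rw [show 2*j+2 = 2*m by omega, Nat.mod_self]
          rw [e]
          have := hasc j hj
          rwa [show 2*j+2 = 2*m by omega, hclose] at this
    · push_neg at hdist
      obtain ⟨a, ha, b, hb, hab, heq⟩ := hdist
      -- wlog a < b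
      have key : ∀ a b, a < 2*m → b < 2*m → a < b → c a = c b → False := by
        clear ha hb hab heq a b
        intro a b ha hb hab heq
        have hrot : ∀ s : ℕ, s < m → HLACAW T m (fun j => c ((j + 2*s) % (2*m))) :=
          fun s _ => hla_rotate (by omega) ⟨hclose, hdes, hasc⟩ s
        rcases Nat.even_or_odd a with ⟨s, hs⟩ | ⟨s, hs⟩ <;>
          rcases Nat.even_or_odd b with ⟨q, hqe⟩ | ⟨q, hqe⟩
        · -- even, even
          have hs' : a = 2*s := by omega
          have hq' : b = 2*q := by omega
          have r := hrot s (by omega)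
          have e1 : ((2*(q-s) : ℕ) + 2*s) % (2*m) = 2*q := by
            rw [show 2*(q-s) + 2*s = 2*q by omega]
            exact Nat.mod_eq_of_lt (by omega)
          have e0 : ((0:ℕ) + 2*s) % (2*m) = 2*s := by
            rw [Nat.zero_add]
            exact Nat.mod_eq_of_lt (by omega)
          have he : (fun j => c ((j + 2*s) % (2*m))) (2*(q-s)) =
              (fun j => c ((j + 2*s) % (2*m))) 0 := by
            show c ((2*(q-s) + 2*s) % (2*m)) = c ((0 + 2*s) % (2*m))
            rw [e1, e0, ← hs', ← hq', heq]
          exact IH (q-s) (by omega) (by omega) _ (hla_even_repeat r (by omega) he)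
        · -- even a, odd b : mixed
          have hs' : a = 2*s := by omega
          have hq' : b = 2*q+1 := by omega
          have r := hrot s (by omega)
          set t := (q + m - s) % m with htdef
          have htm : t < m := Nat.mod_lt _ (by omega)
          have e1 : ((2*t+1 : ℕ) + 2*s) % (2*m) = 2*q+1 := by
            obtain ⟨k, hk⟩ : ∃ k, q + m - s = m * k + t :=
              ⟨(q+m-s)/m, by rw [htdef, Nat.div_add_mod]⟩
            have h3 : (2*m) * k = 2 * (m * k) := by ring
            calc (2*t+1+2*s) % (2*m) = (2*t+1+2*s + (2*m)*k) % (2*m) :=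
                  (Nat.add_mul_mod_self_left _ _ _).symm
              _ = (2*q+1+2*m) % (2*m) := by rw [show 2*t+1+2*s + (2*m)*k = 2*q+1+2*m by omega]
              _ = (2*q+1) % (2*m) := Nat.add_mod_right _ _
              _ = 2*q+1 := Nat.mod_eq_of_lt (by omega)
          have e0 : ((0:ℕ) + 2*s) % (2*m) = 2*s := by
            rw [Nat.zero_add]; exact Nat.mod_eq_of_lt (by omega)
          have he : (fun j => c ((j + 2*s) % (2*m))) (2*t+1) =
              (fun j => c ((j + 2*s) % (2*m))) 0 := by
            show c ((2*t+1 + 2*s) % (2*m)) = c ((0 + 2*s) % (2*m))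
            rw [e1, e0, ← hq', ← hs', heq]
          obtain ⟨m', h1', h2', c', hc'⟩ := hla_mixed hT h2 r htm he
          exact IH m' h2' h1' c' hc'
        · -- odd a, even b : mixed
          have hs' : a = 2*s+1 := by omega
          have hq' : b = 2*q := by omega
          have r := hrot q (by omega)
          set t := (s + m - q) % m with htdef
          have htm : t < m := Nat.mod_lt _ (by omega)
          have e1 : ((2*t+1 : ℕ) + 2*q) % (2*m) = 2*s+1 := by
            obtain ⟨k, hk⟩ : ∃ k, s + m - q = m * k + t :=
              ⟨(s+m-q)/m, by rw [htdef, Nat.div_add_mod]⟩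
            have h3 : (2*m) * k = 2 * (m * k) := by ring
            calc (2*t+1+2*q) % (2*m) = (2*t+1+2*q + (2*m)*k) % (2*m) :=
                  (Nat.add_mul_mod_self_left _ _ _).symm
              _ = (2*s+1+2*m) % (2*m) := by rw [show 2*t+1+2*q + (2*m)*k = 2*s+1+2*m by omega]
              _ = (2*s+1) % (2*m) := Nat.add_mod_right _ _
              _ = 2*s+1 := Nat.mod_eq_of_lt (by omega)
          have e0 : ((0:ℕ) + 2*q) % (2*m) = 2*q := by
            rw [Nat.zero_add]; exact Nat.mod_eq_of_lt (by omega)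
          have he : (fun j => c ((j + 2*q) % (2*m))) (2*t+1) =
              (fun j => c ((j + 2*q) % (2*m))) 0 := by
            show c ((2*t+1 + 2*q) % (2*m)) = c ((0 + 2*q) % (2*m))
            rw [e1, e0, ← hq', ← hs', heq.symm]
          obtain ⟨m', h1', h2', c', hc'⟩ := hla_mixed hT h2 r htm he
          exact IH m' h2' h1' c' hc'
        · -- odd, odd
          have hs' : a = 2*s+1 := by omega
          have hq' : b = 2*q+1 := by omega
          have r := hrot s (by omega)
          have e1 : ((2*(q-s)+1 : ℕ) + 2*s) % (2*m) = 2*q+1 := by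
            rw [show 2*(q-s)+1 + 2*s = 2*q+1 by omega]
            exact Nat.mod_eq_of_lt (by omega)
          have e0 : ((1:ℕ) + 2*s) % (2*m) = 2*s+1 := by
            rw [show (1:ℕ) + 2*s = 2*s+1 by omega]
            exact Nat.mod_eq_of_lt (by omega)
          have he : (fun j => c ((j + 2*s) % (2*m))) (2*(q-s)+1) =
              (fun j => c ((j + 2*s) % (2*m))) 1 := by
            show c ((2*(q-s)+1 + 2*s) % (2*m)) = c ((1 + 2*s) % (2*m))
            rw [e1, e0, ← hq', ← hs', heq]
          exact IH (q-s) (by omega) (by omega) _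
            (hla_odd_repeat r (by omega) (by omega) he)
      rcases Nat.lt_or_gt_of_ne hab with h | h
      · exact key a b ha hb h heq
      · exact key b a hb ha h heq.symm

/-- `HLARel T j k` : `x j` is forced to be smaller than `x k`. -/
def HLARel (T : ℕ → ℕ → Prop) (j k : ℕ) : Prop :=
  ∃ i, i < j ∧ i < k ∧ T i j ∧ T k i

lemma hla_chain {α : Type*} {R : α → α → Prop} {u v : α}
    (h : Relation.TransGen R u v) :
    ∃ m, 1 ≤ m ∧ ∃ g : ℕ → α, g 0 = u ∧ g m = v ∧ ∀ i < m, R (g i) (g (i+1)) := by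
  induction h with
  | @single b hr =>
    refine ⟨1, le_refl _, fun i => if i = 0 then u else b, by simp, by simp, ?_⟩
    intro i hi
    have : i = 0 := by omega
    subst this
    simpa using hr
  | @tail b d hab hbc IH =>
    obtain ⟨m, hm, g, hg0, hgm, hstep⟩ := IH
    refine ⟨m+1, by omega, fun i => if i = m+1 then d else g i, ?_, by simp, ?_⟩
    · simpa [Nat.ne_of_lt (by omega : 0 < m+1)] using hg0
    · intro i hi
      rcases Nat.lt_or_ge i m with h1 | h1
      · simpa [Nat.ne_of_lt (by omega : i < m+1), Nat.ne_of_lt (by omega : i+1 < m+1),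
          Nat.ne_of_lt h1]
          using hstep i h1
      · have hmi : m = i := by omega
        subst hmi
        simpa [Nat.ne_of_lt (by omega : m < m+1), hgm] using hbc

lemma hla_no_cycle {n : ℕ} {T : ℕ → ℕ → Prop} (hT : IsTournamentOn n T)
    (hA : AltAcyclic n T) : ∀ v, ¬ Relation.TransGen (HLARel T) v v := by
  intro v hcyc
  obtain ⟨m, hm, g, hg0, hgm, hstep⟩ := hla_chain hcyc
  have hw : ∀ i, ∃ wv, i < m → (wv < g i ∧ wv < g (i+1) ∧ T wv (g i) ∧ T (g (i+1)) wv) := by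
    intro i
    by_cases h : i < m
    · obtain ⟨w, h1, h2, h3, h4⟩ := hstep i h
      exact ⟨w, fun _ => ⟨h1, h2, h3, h4⟩⟩
    · exact ⟨0, fun h' => absurd h' h⟩
  choose w hwp using hw
  apply hla_no_caw hT hA m hm (fun p => if p % 2 = 0 then g (m - p/2) else w (m - 1 - p/2))
  refine ⟨?_, ?_, ?_⟩
  · show (if (2*m) % 2 = 0 then g (m - (2*m)/2) else _) = (if (0:ℕ) % 2 = 0 then g (m - 0/2) else _)
    rw [if_pos (by omega), if_pos (by omega)]
    rw [show m - (2*m)/2 = 0 by omega, show m - 0/2 = m by omega, hg0, hgm]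
  · intro u hu
    show T (if (2*u) % 2 = 0 then g (m - (2*u)/2) else w (m - 1 - (2*u)/2))
        (if (2*u+1) % 2 = 0 then g (m - (2*u+1)/2) else w (m - 1 - (2*u+1)/2)) ∧
      (if (2*u+1) % 2 = 0 then g (m - (2*u+1)/2) else w (m - 1 - (2*u+1)/2)) <
        (if (2*u) % 2 = 0 then g (m - (2*u)/2) else w (m - 1 - (2*u)/2))
    rw [if_pos (by omega), if_neg (by omega), show (2*u)/2 = u by omega,
      show (2*u+1)/2 = u by omega]
    have hi : m - 1 - u < m := by omega
    obtain ⟨h1, h2, h3, h4⟩ := hwp (m-1-u) hi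
    rw [show m - 1 - u + 1 = m - u by omega] at h2 h4
    exact ⟨h4, h2⟩
  · intro u hu
    show T (if (2*u+1) % 2 = 0 then g (m - (2*u+1)/2) else w (m - 1 - (2*u+1)/2))
        (if (2*u+2) % 2 = 0 then g (m - (2*u+2)/2) else w (m - 1 - (2*u+2)/2)) ∧
      (if (2*u+1) % 2 = 0 then g (m - (2*u+1)/2) else w (m - 1 - (2*u+1)/2)) <
        (if (2*u+2) % 2 = 0 then g (m - (2*u+2)/2) else w (m - 1 - (2*u+2)/2))
    rw [if_neg (by omega), if_pos (by omega), show (2*u+1)/2 = u by omega,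
      show (2*u+2)/2 = u+1 by omega, show m - (u+1) = m - 1 - u by omega]
    have hi : m - 1 - u < m := by omega
    obtain ⟨h1, h2, h3, h4⟩ := hwp (m-1-u) hi
    exact ⟨h3, h1⟩

/-- Every alternation acyclic tournament `T` on `{1,…,n}`
arises from a region of the homogenized Linial arrangement: there are real
numbers `x 1, …, x n, y 1, …, y (n-1)` with `x i - y i ≠ x j` for all
`1 ≤ i < j ≤ n` such that for `i < j` the edge `i → j` is present exactly when
`x i - y i > x j`, and the edge `j → i` exactly when `x i - y i < x j`. -/
theorem altAcyclic_is_region_tournament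
    (n : ℕ) (T : ℕ → ℕ → Prop) (hT : IsTournamentOn n T) (hA : AltAcyclic n T) :
    ∃ x y : ℕ → ℝ,
      (∀ i j : ℕ, 1 ≤ i → i < j → j ≤ n → x i - y i ≠ x j) ∧
      (∀ i j : ℕ, 1 ≤ i → i < j → j ≤ n →
        (T i j ↔ x i - y i > x j) ∧ (T j i ↔ x i - y i < x j)) := by
  classical
  -- the rank function
  set f : ℕ → ℕ := fun j => ((Finset.Icc 1 n).filter
    (fun u => Relation.TransGen (HLARel T) u j)).card with hf
  have hmono : ∀ j k, HLARel T j k → f j < f k := by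
    intro j k hrel
    have hjmem : j ∈ Finset.Icc 1 n := by
      obtain ⟨i, _, _, hij, _⟩ := hrel
      exact (hT.1 i j hij).2.1
    apply Finset.card_lt_card
    rw [Finset.ssubset_def]
    constructor
    · intro u hu
      rw [Finset.mem_filter] at hu ⊢
      exact ⟨hu.1, hu.2.trans (Relation.TransGen.single hrel)⟩
    · intro hsup
      have hjk : j ∈ (Finset.Icc 1 n).filter
          (fun u => Relation.TransGen (HLARel T) u k) := by
        rw [Finset.mem_filter]
        exact ⟨hjmem, Relation.TransGen.single hrel⟩
      have := hsup hjk
      rw [Finset.mem_filter] at this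
      exact hla_no_cycle hT hA j this.2
  -- descent sets and thresholds
  set D : ℕ → Finset ℕ := fun i => (Finset.Ioc i n).filter (fun j => T i j) with hD
  set z : ℕ → ℝ := fun i => if (D i).Nonempty then (Nat.cast ((D i).sup f) : ℝ) + 1/2 else -1 with hz
  set x : ℕ → ℝ := fun j => (f j : ℝ) with hx
  refine ⟨x, fun i => x i - z i, ?_, ?_⟩
  all_goals {
    intro i j hi hij hjn
    have hzi : x i - (x i - z i) = z i := by ring
    have himem : i ∈ Finset.Icc 1 n := Finset.mem_Icc.mpr ⟨hi, by omega⟩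
    have hjmem : j ∈ Finset.Icc 1 n := Finset.mem_Icc.mpr ⟨by omega, hjn⟩
    have hjD : T i j → j ∈ D i := by
      intro h
      rw [hD]
      exact Finset.mem_filter.mpr ⟨Finset.mem_Ioc.mpr ⟨hij, hjn⟩, h⟩
    have hA1 : T i j → x j < z i := by
      intro h
      have hne : (D i).Nonempty := ⟨j, hjD h⟩
      rw [hz]
      simp only [if_pos hne]
      have : f j ≤ (D i).sup f := Finset.le_sup (hjD h)
      have : (f j : ℝ) ≤ (Nat.cast ((D i).sup f) : ℝ) := Nat.cast_le.mpr this
      rw [hx]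
      simp only
      linarith
    have hB1 : T j i → z i < x j := by
      intro h
      rw [hz]
      by_cases hne : (D i).Nonempty
      · simp only [if_pos hne]
        obtain ⟨j', hj'mem, hj'⟩ := Finset.exists_mem_eq_sup (D i) hne f
        rw [hD] at hj'mem
        rw [Finset.mem_filter, Finset.mem_Ioc] at hj'mem
        have hrel : HLARel T j' j := ⟨i, hj'mem.1.1, hij, hj'mem.2, h⟩
        have := hmono j' j hrel
        rw [hj']
        rw [hx]
        simp only
        have : ((f j' : ℝ)) + 1 ≤ (f j : ℝ) := by
          have : f j' + 1 ≤ f j := this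
          exact_mod_cast this
        linarith
      · simp only [if_neg hne]
        rw [hx]
        simp only
        have : (0:ℝ) ≤ (f j : ℝ) := Nat.cast_nonneg _
        linarith
    have htotij : T i j ∨ T j i := by
      by_cases h : T j i
      · exact Or.inr h
      · exact Or.inl ((hT.2 i j himem hjmem (by omega)).mpr h)
    rw [hzi]
    first
    | -- goal 1 : z i ≠ x j
      (rcases htotij with h | h
       · exact ne_of_gt (hA1 h)
       · exact ne_of_lt (hB1 h))
    | -- goal 2
      (constructor
       · constructor
         · exact fun h => hA1 h
         · intro h
           rcases htotij with h' | h'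
           · exact h'
           · exact absurd h (not_lt.mpr (le_of_lt (hB1 h')))
       · constructor
         · exact fun h => hB1 h
         · intro h
           rcases htotij with h' | h'
           · exact absurd h (not_lt.mpr (le_of_lt (hA1 h')))
           · exact h')
  }
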